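/- Let k be a field of characteristic p > 0 and let ρ₁ = ρ_{N₁,...,N_r} and ρ₂ = ρ_{M₁,...,M_s} be group homomorphisms (Z/pZ)^r → GL(n, k) and (Z/pZ)^s → GL(n, k) with N_r ≠ 0 and M_s ≠ 0 (r, s ≥ 1). If Π_{i=1}^r Exp(T^{p^{i-1}}·N_i) = Π_{j=1}^s Exp(T^{p^{j-1}}·M_j) in Mat(n, k[T]), then r = s and N_i = M_i for all i. -/

import Mathlib

open Polynomial

/-- `A(T) ∈ Mat(n, k[T])` is an exponential matrix: `A(T)·A(T') = A(T+T')` in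
`Mat(n, k[T,T'])` and `A(0) = I_n`. -/
def IsExpMat {k : Type*} [Field k] {n : ℕ}
    (A : Matrix (Fin n) (Fin n) (Polynomial k)) : Prop :=
  A.map (fun q => aeval ((C X + X : Polynomial (Polynomial k))) q) =
    A.map (fun q => aeval ((C X : Polynomial (Polynomial k))) q) *
      A.map (fun q => aeval (X : Polynomial (Polynomial k)) q) ∧
  A.map (fun q => q.eval 0) = 1

/-- `Exp(T^m · N) = ∑_{j=0}^{p-1} T^{m j} N^j / j!`. -/
noncomputable def expT (k : Type*) [Field k] (n p m : ℕ)
    (N : Matrix (Fin n) (Fin n) k) : Matrix (Fin n) (Fin n) (Polynomial k) :=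
  ∑ j ∈ Finset.range p, (C ((j.factorial : k)⁻¹) * X ^ (m * j)) • ((N ^ j).map C)

lemma coeff_expT {k : Type*} [Field k] {n p : ℕ} (m : ℕ) (hm : 0 < m)
    (N : Matrix (Fin n) (Fin n) k) (e : ℕ) :
    (matPolyEquiv (expT k n p m N)).coeff e =
      if m ∣ e ∧ e / m < p then (((e / m).factorial : k)⁻¹) • N ^ (e / m) else 0 := by
  ext i j
  rw [matPolyEquiv_coeff_apply]
  unfold expT
  rw [Matrix.sum_apply]
  have key : ∀ t, (((C ((t.factorial : k)⁻¹) * X ^ (m * t)) • ((N ^ t).map C)) i j).coeff e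
        = if m * t = e then ((t.factorial : k)⁻¹) * ((N ^ t) i j) else 0 := by
    intro t
    simp only [Matrix.smul_apply, Matrix.map_apply, smul_eq_mul]
    rw [mul_assoc, mul_comm (X ^ (m * t)) (C _), ← mul_assoc, ← C_mul, coeff_C_mul, coeff_X_pow]
    split <;> rename_i h
    · rw [if_pos h.symm, mul_one]
    · rw [if_neg (fun hh => h hh.symm), mul_zero]
  rw [finset_sum_coeff, Finset.sum_congr rfl (fun t _ => key t)]
  by_cases hd : m ∣ e ∧ e / m < p
  · obtain ⟨⟨c, rfl⟩, hc⟩ := hd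
    rw [Nat.mul_div_cancel_left c hm] at hc ⊢
    rw [if_pos ⟨⟨c, rfl⟩, hc⟩, Finset.sum_eq_single c]
    · simp [Matrix.smul_apply, smul_eq_mul]
    · intro b _ hb
      rw [if_neg (fun h => hb (Nat.eq_of_mul_eq_mul_left hm h))]
    · intro h
      exact absurd (Finset.mem_range.2 hc) h
  · rw [if_neg hd]
    simp only [Matrix.zero_apply]
    apply Finset.sum_eq_zero
    intro t ht
    rw [if_neg]
    rintro rfl
    exact hd ⟨⟨t, rfl⟩, by rwa [Nat.mul_div_cancel_left t hm, ← Finset.mem_range]⟩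

section Prod
variable {R : Type*} [Ring R] (p : ℕ) (Q : ℕ → R[X])

/-- prefix product `Q 0 * Q 1 * ⋯ * Q (b-1)` -/
noncomputable def Lp : ℕ → R[X]
  | 0 => 1
  | b + 1 => Lp b * Q b

/-- product `Q a * ⋯ * Q (a+c-1)` -/
noncomputable def Rp : ℕ → ℕ → R[X]
  | _, 0 => 1
  | a, c + 1 => Q a * Rp (a + 1) c

lemma Lp_mul_Rp : ∀ (c b : ℕ), Lp Q b * Rp Q b c = Lp Q (b + c) := by
  intro c
  induction c with
  | zero => intro b; simp [Rp]
  | succ c ih =>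
    intro b
    rw [Rp, ← mul_assoc, show Lp Q b * Q b = Lp Q (b+1) from rfl, ih]
    congr 1
    omega

lemma ofFn_prod_eq_Lp : ∀ (m : ℕ) (Q : ℕ → R[X]),
    (List.ofFn fun i : Fin m => Q i).prod = Lp Q m := by
  intro m
  induction m with
  | zero => intro Q; simp [Lp]
  | succ m ih =>
    intro Q
    rw [List.ofFn_succ', List.concat_eq_append, List.prod_append, List.prod_singleton]
    simp only [Fin.coe_castSucc, Fin.val_last]
    rw [ih, Lp]

variable (hQ0 : ∀ t, (Q t).coeff 0 = 1)
variable (hQsupp : ∀ t e, (Q t).coeff e ≠ 0 → p ^ t ∣ e ∧ e ≤ p ^ t * (p - 1))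

include hQ0 in
lemma Lp_coeff_zero : ∀ b, (Lp Q b).coeff 0 = 1 := by
  intro b
  induction b with
  | zero => simp [Lp]
  | succ b ih => rw [Lp, mul_coeff_zero, ih, hQ0, one_mul]

include hQ0 in
lemma Rp_coeff_zero : ∀ c a, (Rp Q a c).coeff 0 = 1 := by
  intro c
  induction c with
  | zero => simp [Rp]
  | succ c ih => intro a; rw [Rp, mul_coeff_zero, ih, hQ0, one_mul]

include hQsupp in
lemma Lp_coeff_bound (hp : 1 ≤ p) : ∀ b e, (Lp Q b).coeff e ≠ 0 → e < p ^ b := by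
  intro b
  induction b with
  | zero =>
    intro e he
    rw [Lp] at he
    have he0 : e = 0 := by
      by_contra h
      exact he (by rw [coeff_one, if_neg h])
    simp [he0]
  | succ b ih =>
    intro e he
    rw [Lp, coeff_mul] at he
    obtain ⟨x, hx, hne⟩ := Finset.exists_ne_zero_of_sum_ne_zero he
    rw [Finset.HasAntidiagonal.mem_antidiagonal] at hx
    have h1 : (Lp Q b).coeff x.1 ≠ 0 := fun h => hne (by rw [h, zero_mul])
    have h2 : (Q b).coeff x.2 ≠ 0 := fun h => hne (by rw [h, mul_zero])
    have b1 := ih x.1 h1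
    have b2 := (hQsupp b x.2 h2).2
    obtain ⟨u, rfl⟩ : ∃ u, p = u + 1 := ⟨p - 1, by omega⟩
    rw [show u + 1 - 1 = u from rfl] at b2
    rw [pow_succ, Nat.mul_succ]
    omega

include hQsupp in
lemma Rp_coeff_supp : ∀ c a e, (Rp Q a c).coeff e ≠ 0 → p ^ a ∣ e := by
  intro c
  induction c with
  | zero =>
    intro a e he
    rw [Rp] at he
    have he0 : e = 0 := by
      by_contra h
      exact he (by rw [coeff_one, if_neg h])
    simp [he0]
  | succ c ih =>
    intro a e he
    rw [Rp, coeff_mul] at he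
    obtain ⟨x, hx, hne⟩ := Finset.exists_ne_zero_of_sum_ne_zero he
    rw [Finset.HasAntidiagonal.mem_antidiagonal] at hx
    have h1 : (Q a).coeff x.1 ≠ 0 := fun h => hne (by rw [h, zero_mul])
    have h2 : (Rp Q (a+1) c).coeff x.2 ≠ 0 := fun h => hne (by rw [h, mul_zero])
    have d1 := (hQsupp a x.1 h1).1
    have d2 : p ^ a ∣ x.2 := dvd_trans (pow_dvd_pow p (Nat.le_succ a)) (ih (a+1) x.2 h2)
    exact hx ▸ Nat.dvd_add d1 d2

include hQ0 hQsupp in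
/-- Coefficient extraction: the coefficient of `X^(p^i)` in the product of the first `m`
factors is the corresponding coefficient of `Q i`. -/
lemma Lp_coeff_pow (hp : 2 ≤ p) {i m : ℕ} (him : i < m) :
    (Lp Q m).coeff (p ^ i) = (Q i).coeff (p ^ i) := by
  obtain ⟨c, rfl⟩ : ∃ c, m = (i + 1) + c := ⟨m - (i+1), by omega⟩
  rw [← Lp_mul_Rp, coeff_mul]
  have hppos : 1 ≤ p := by omega
  rw [Finset.sum_eq_single ((p : ℕ) ^ i, (0 : ℕ))]
  · rw [Rp_coeff_zero Q hQ0, mul_one]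
    rw [show Lp Q (i+1) = Lp Q i * Q i from rfl, coeff_mul]
    rw [Finset.sum_eq_single ((0 : ℕ), (p : ℕ) ^ i)]
    · rw [Lp_coeff_zero Q hQ0, one_mul]
    · rintro ⟨a, b⟩ hx hne
      rw [Finset.HasAntidiagonal.mem_antidiagonal] at hx
      by_cases h1 : (Lp Q i).coeff a = 0
      · rw [h1, zero_mul]
      by_cases h2 : (Q i).coeff b = 0
      · rw [h2, mul_zero]
      exfalso
      have ha := Lp_coeff_bound p Q hQsupp hppos i a h1
      have hb := (hQsupp i b h2).1
      have hb0 : b ≠ 0 := by rintro rfl; simp at hx; omega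
      have : p ^ i ≤ b := Nat.le_of_dvd (Nat.pos_of_ne_zero hb0) hb
      have : b = p ^ i := by omega
      exact hne (by simp only [Prod.mk.injEq]; omega)
    · intro h
      exact absurd (Finset.HasAntidiagonal.mem_antidiagonal.2 (by omega)) h
  · rintro ⟨a, b⟩ hx hne
    rw [Finset.HasAntidiagonal.mem_antidiagonal] at hx
    by_cases h2 : (Rp Q (i+1) c).coeff b = 0
    · rw [h2, mul_zero]
    exfalso
    have hb := Rp_coeff_supp p Q hQsupp c (i+1) b h2
    have hb0 : b = 0 := by
      rcases Nat.eq_zero_or_pos b with h | h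
      · exact h
      have := Nat.le_of_dvd h hb
      have : p ^ i < p ^ (i+1) := Nat.pow_lt_pow_succ (by omega)
      omega
    exact hne (by simp only [Prod.mk.injEq]; omega)
  · intro h
    exact absurd (Finset.HasAntidiagonal.mem_antidiagonal.2 (by omega)) h

end Prod

section Main
variable {k : Type*} [Field k] {p n : ℕ}

/-- extend a `Fin (r+1)`-indexed family by zero -/
noncomputable def Qex (k : Type*) [Field k] (n p r : ℕ)
    (N : Fin (r + 1) → Matrix (Fin n) (Fin n) k) (t : ℕ) :
    (Matrix (Fin n) (Fin n) k)[X] :=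
  matPolyEquiv (expT k n p (p ^ t) (if h : t < r + 1 then N ⟨t, h⟩ else 0))

lemma Qex_coeff (hp : 2 ≤ p) {r : ℕ} (N : Fin (r + 1) → Matrix (Fin n) (Fin n) k)
    (t e : ℕ) : (Qex k n p r N t).coeff e =
      if p ^ t ∣ e ∧ e / p ^ t < p then
        (((e / p ^ t).factorial : k)⁻¹) • (if h : t < r + 1 then N ⟨t, h⟩ else 0) ^ (e / p ^ t)
      else 0 :=
  coeff_expT (p ^ t) (pow_pos (by omega : 0 < p) t) _ e

lemma Qex_coeff_zero (hp : 2 ≤ p) {r : ℕ} (N : Fin (r + 1) → Matrix (Fin n) (Fin n) k)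
    (t : ℕ) : (Qex k n p r N t).coeff 0 = 1 := by
  rw [Qex_coeff hp]
  have h1 : p ^ t ∣ 0 := dvd_zero _
  have h2 : 0 / p ^ t = 0 := Nat.zero_div _
  rw [if_pos ⟨h1, by omega⟩, h2]
  simp

lemma Qex_coeff_supp (hp : 2 ≤ p) {r : ℕ} (N : Fin (r + 1) → Matrix (Fin n) (Fin n) k)
    (t e : ℕ) (he : (Qex k n p r N t).coeff e ≠ 0) :
    p ^ t ∣ e ∧ e ≤ p ^ t * (p - 1) := by
  rw [Qex_coeff hp] at he
  by_cases h : p ^ t ∣ e ∧ e / p ^ t < p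
  · refine ⟨h.1, ?_⟩
    have := Nat.mul_div_cancel' h.1
    have h2 : e / p ^ t ≤ p - 1 := by omega
    calc e = p ^ t * (e / p ^ t) := this.symm
    _ ≤ p ^ t * (p - 1) := Nat.mul_le_mul_left _ h2
  · exact absurd (if_neg h) he

lemma Qex_coeff_pow (hp : 2 ≤ p) {r : ℕ} (N : Fin (r + 1) → Matrix (Fin n) (Fin n) k)
    (i : Fin (r + 1)) : (Qex k n p r N (i : ℕ)).coeff (p ^ (i : ℕ)) = N i := by
  have hpos : 0 < p ^ (i : ℕ) := pow_pos (by omega : 0 < p) _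
  rw [Qex_coeff hp, if_pos ⟨dvd_refl _, by rw [Nat.div_self hpos]; omega⟩, Nat.div_self hpos]
  simp [i.isLt]

lemma prod_eq_Lp_Qex {r : ℕ} (N : Fin (r + 1) → Matrix (Fin n) (Fin n) k) :
    matPolyEquiv ((List.ofFn (fun i : Fin (r + 1) =>
        expT k n p (p ^ (i : ℕ)) (N i))).prod) = Lp (Qex k n p r N) (r + 1) := by
  rw [map_list_prod (matPolyEquiv : Matrix (Fin n) (Fin n) k[X] ≃ₐ[k] _), List.map_ofFn,
    ← ofFn_prod_eq_Lp (r + 1) (Qex k n p r N)]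
  congr 1
  exact congrArg List.ofFn (funext fun i => by
    simp only [Function.comp_apply, Qex, dif_pos i.isLt, Fin.eta])

end Main

/-- Uniqueness of the decomposition: if two products `∏ Exp(T^{p^{i-1}} N_i)` and
`∏ Exp(T^{p^{j-1}} M_j)` with `N_r ≠ 0`, `M_s ≠ 0` agree, then `r = s` and
`N_i = M_i` for all `i`. -/
theorem stmt_18 {k : Type*} [Field k] {p : ℕ} (hp : p.Prime) [CharP k p]
    {n r s : ℕ}
    (N : Fin (r + 1) → Matrix (Fin n) (Fin n) k)
    (M : Fin (s + 1) → Matrix (Fin n) (Fin n) k)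
    (hNnil : ∀ i, N i ^ p = 0) (hNcomm : ∀ i j, Commute (N i) (N j))
    (hMnil : ∀ i, M i ^ p = 0) (hMcomm : ∀ i j, Commute (M i) (M j))
    (hNlast : N (Fin.last r) ≠ 0) (hMlast : M (Fin.last s) ≠ 0)
    (heq : (List.ofFn (fun i : Fin (r + 1) => expT k n p (p ^ (i : ℕ)) (N i))).prod =
      (List.ofFn (fun j : Fin (s + 1) => expT k n p (p ^ (j : ℕ)) (M j))).prod) :
    ∃ h : r = s, ∀ i : Fin (r + 1), N i = M (Fin.cast (by rw [h]) i) := by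
  have hp2 : 2 ≤ p := hp.two_le
  have heq' : Lp (Qex k n p r N) (r + 1) = Lp (Qex k n p s M) (s + 1) := by
    rw [← prod_eq_Lp_Qex, ← prod_eq_Lp_Qex, heq]
  -- general fact: if a < b then coeff p^b of Lp ... (a+1) vanishes
  have key : ∀ (a : ℕ) (A : Fin (a + 1) → Matrix (Fin n) (Fin n) k) (i : Fin (a + 1)),
      (Lp (Qex k n p a A) (a + 1)).coeff (p ^ (i : ℕ)) = A i := by
    intro a A i
    rw [Lp_coeff_pow p _ (Qex_coeff_zero hp2 A) (Qex_coeff_supp hp2 A) hp2 i.isLt,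
      Qex_coeff_pow hp2]
  have vanish : ∀ (a b : ℕ) (A : Fin (a + 1) → Matrix (Fin n) (Fin n) k), a < b →
      (Lp (Qex k n p a A) (a + 1)).coeff (p ^ b) = 0 := by
    intro a b A hab
    by_contra h
    have := Lp_coeff_bound p (Qex k n p a A) (Qex_coeff_supp hp2 A) (by omega) (a + 1) _ h
    have : p ^ (a + 1) ≤ p ^ b := Nat.pow_le_pow_right (by omega) (by omega)
    omega
  have hrs : r = s := by
    by_contra h
    rcases Nat.lt_or_ge r s with hlt | hge
    · have h1 := vanish r s N hlt
      have h2 := key s M (Fin.last s)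
      rw [heq'] at h1
      rw [Fin.val_last] at h2
      exact hMlast (by rw [← h2, h1])
    · have hlt : s < r := by omega
      have h1 := vanish s r M hlt
      have h2 := key r N (Fin.last r)
      rw [← heq'] at h1
      rw [Fin.val_last] at h2
      exact hNlast (by rw [← h2, h1])
  refine ⟨hrs, ?_⟩
  subst hrs
  intro i
  have h1 := key r N i
  have h2 := key r M i
  rw [heq'] at h1
  have hcast : ∀ (h : r + 1 = r + 1), Fin.cast h i = i := fun _ => Fin.val_injective rfl
  rw [hcast _, ← h1, h2]
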